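/- Let (Ω, F, P) be a probability space, B ∈ F with π₀ = P(B) ∈ (0,1), G a sub-σ-algebra of F, and let X = P(B | G). For any measurable set J ⊆ [0, π₀), we have P(X ∈ J | B) ≤ P(X ∈ J | Bᶜ). -/

import Mathlib

open MeasureTheory ProbabilityTheory

theorem stmt_1 {Ω : Type*} [m0 : MeasurableSpace Ω] (μ : Measure Ω) [IsProbabilityMeasure μ]
    (B : Set Ω) (hB : MeasurableSet B)
    (hB0 : 0 < (μ B).toReal) (hB1 : (μ B).toReal < 1)
    (m : MeasurableSpace Ω) (hm : m ≤ m0)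
    (X : Ω → ℝ) (hX : X = MeasureTheory.condExp m μ (B.indicator fun _ => (1 : ℝ)))
    (J : Set ℝ) (hJ : MeasurableSet J) (hJsub : J ⊆ Set.Ico 0 ((μ B).toReal)) :
    μ[|B] (X ⁻¹' J) ≤ μ[|Bᶜ] (X ⁻¹' J) := by
  letI : MeasurableSpace Ω := m0
  have hfint : Integrable (B.indicator fun _ => (1 : ℝ)) μ :=
    (integrable_const (1 : ℝ)).indicator hB
  have hAm' : MeasurableSet[m] ((condExp m μ (B.indicator fun _ => (1 : ℝ))) ⁻¹' J) :=
    stronglyMeasurable_condExp.measurable hJ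
  have hAm : MeasurableSet[m] (X ⁻¹' J) := by rw [hX]; exact hAm'
  have hA0 : MeasurableSet (X ⁻¹' J) := hm _ hAm
  have hint : ∫ x in X ⁻¹' J, X x ∂μ = ∫ x in X ⁻¹' J, B.indicator (fun _ => (1 : ℝ)) x ∂μ := by
    rw [hX]; exact setIntegral_condExp hm hfint hAm'
  have h1 : ∫ x in X ⁻¹' J, B.indicator (fun _ => (1 : ℝ)) x ∂μ = (μ (B ∩ X ⁻¹' J)).toReal := by
    rw [setIntegral_indicator hB, setIntegral_const]
    simp [Set.inter_comm]
    rfl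
  have hboundint : ∫ x in X ⁻¹' J, X x ∂μ ≤ (μ (X ⁻¹' J)).toReal * (μ B).toReal := by
    calc ∫ x in X ⁻¹' J, X x ∂μ ≤ ∫ _ in X ⁻¹' J, (μ B).toReal ∂μ := by
          refine setIntegral_mono_on ?_ (integrableOn_const (measure_ne_top μ _))
            hA0 (fun x hx => (hJsub hx).2.le)
          rw [hX]; exact integrable_condExp.integrableOn
      _ = (μ (X ⁻¹' J)).toReal * (μ B).toReal := by rw [setIntegral_const, smul_eq_mul]; rfl
  have hkey : (μ (B ∩ X ⁻¹' J)).toReal ≤ (μ (X ⁻¹' J)).toReal * (μ B).toReal := by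
    rw [← h1, ← hint]; exact hboundint
  have habc : (μ (B ∩ X ⁻¹' J)).toReal + (μ (Bᶜ ∩ X ⁻¹' J)).toReal = (μ (X ⁻¹' J)).toReal := by
    rw [← ENNReal.toReal_add (measure_ne_top _ _) (measure_ne_top _ _),
      Set.inter_comm B _, Set.inter_comm Bᶜ _, ← Set.diff_eq, measure_inter_add_diff _ hB]
  have hBne : μ B ≠ 0 := by
    intro h; rw [h] at hB0; simp at hB0
  have hcomp : (μ Bᶜ).toReal = 1 - (μ B).toReal := by
    rw [measure_compl hB (measure_ne_top μ B), measure_univ,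
      ENNReal.toReal_sub_of_le prob_le_one ENNReal.one_ne_top, ENNReal.toReal_one]
  have hBcne : μ Bᶜ ≠ 0 := by
    intro h
    rw [h] at hcomp
    simp at hcomp
    linarith
  have h1p : 0 < 1 - (μ B).toReal := by linarith
  rw [cond_apply hB, cond_apply hB.compl]
  rw [← ENNReal.toReal_le_toReal (by finiteness) (by finiteness)]
  rw [ENNReal.toReal_mul, ENNReal.toReal_mul, ENNReal.toReal_inv, ENNReal.toReal_inv,
    hcomp, inv_mul_eq_div, inv_mul_eq_div, div_le_div_iff₀ hB0 h1p]
  nlinarith [ENNReal.toReal_nonneg (a := μ (Bᶜ ∩ X ⁻¹' J))]
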